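/- Consider a short exact sequence of groups 1 → N → G → H → 1 in which both G and N are finitely generated. Then M_SFT(H) ⊆ M_SFT(G) and M_sof(H) ⊆ M_sof(G). -/

import Mathlib

namespace MedvedevFormal

/-! ### Medvedev reducibility on Baire space -/

/-- The finite prefix of length `k` of a point of Baire space, as a list. -/
def pref (x : ℕ → ℕ) (k : ℕ) : List ℕ := (List.range k).map x

/-- Medvedev reducibility `m(P) ≤ m(Q)` between subsets of Baire space: some computable
monotone prefix-functional (i.e. a partial computable type-two functional), defined on all
of `Q`, maps every element of `Q` to an element of `P`. -/
def BaireLE (P Q : Set (ℕ → ℕ)) : Prop :=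
  ∃ φ : List ℕ → List ℕ, Computable φ ∧
    (∀ l₁ l₂ : List ℕ, l₁ <+: l₂ → φ l₁ <+: φ l₂) ∧
    ∀ x ∈ Q, ∃ y ∈ P, ∀ n : ℕ, ∃ k : ℕ, (φ (pref x k))[n]? = some (y n)

/-- Medvedev equivalence: `m(P) = m(Q)`. -/
def BaireEquiv (P Q : Set (ℕ → ℕ)) : Prop := BaireLE P Q ∧ BaireLE Q P

/-- A canonical representative of the join `m(P) ∨ m(Q)`. -/
def joinSet (P Q : Set (ℕ → ℕ)) : Set (ℕ → ℕ) :=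
  {x | (fun n => x (2 * n)) ∈ P ∧ (fun n => x (2 * n + 1)) ∈ Q}

/-- A canonical representative of the meet `m(P) ∧ m(Q)`. -/
def meetSet (P Q : Set (ℕ → ℕ)) : Set (ℕ → ℕ) :=
  {x | (x 0 = 0 ∧ (fun n => x (n + 1)) ∈ P) ∨ (x 0 = 1 ∧ (fun n => x (n + 1)) ∈ Q)}

/-- `P` has the zero Medvedev degree `0_M`: it contains a computable point. -/
def IsZeroDeg (P : Set (ℕ → ℕ)) : Prop := ∃ y ∈ P, Computable y

/-- The cylinder of a finite word in Baire space. -/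
def cylinder (l : List ℕ) : Set (ℕ → ℕ) :=
  {x | ∀ (i : ℕ) (h : i < l.length), x i = l[i]}

/-- Cantor space `{0,1}^ℕ` inside Baire space. -/
def cantorSpace : Set (ℕ → ℕ) := {x | ∀ n, x n ≤ 1}

/-- `P` is an effectively closed (`Π⁰₁`) subset of Cantor space: its complement within
Cantor space is the union of the cylinders of a computably enumerable sequence of words. -/
def IsPi01Cantor (P : Set (ℕ → ℕ)) : Prop :=
  ∃ f : ℕ → List ℕ, Computable f ∧ P = cantorSpace \ ⋃ n, cylinder (f n)

/-- The Medvedev degree of `P` is a `Π⁰₁` Medvedev degree. -/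
def IsPi01Deg (P : Set (ℕ → ℕ)) : Prop :=
  ∃ Q, IsPi01Cantor Q ∧ Q.Nonempty ∧ BaireEquiv P Q

/-- `P` realizes the maximal `Π⁰₁` Medvedev degree (the degree of the class of complete
consistent extensions of Peano arithmetic): it is a nonempty `Π⁰₁` subset of Cantor space
to which every nonempty `Π⁰₁` subset of Cantor space is Medvedev reducible. -/
def IsMaxPi01 (P : Set (ℕ → ℕ)) : Prop :=
  IsPi01Cantor P ∧ P.Nonempty ∧ ∀ Q, IsPi01Cantor Q → Q.Nonempty → BaireLE Q P

/-! ### Encoding of configuration spaces -/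

/-- The canonical encoding of a configuration `x : α → A` as a point of Baire space. -/
def confFun {α A : Type*} [Encodable α] [Encodable A] (x : α → A) : ℕ → ℕ :=
  fun n => Encodable.encode ((Encodable.decode (α := α) n).map x)

/-- The image of a set of configurations in Baire space, used to measure its
Medvedev degree. -/
def mSet {α A : Type*} [Encodable α] [Encodable A] (X : Set (α → A)) : Set (ℕ → ℕ) :=
  confFun '' X

/-- A configuration is computable if its Baire-space encoding is computable. -/
def ComputablePoint {α A : Type*} [Encodable α] [Encodable A] (x : α → A) : Prop :=
  Computable (confFun x)

/-- `m(X) ≤ m(Y)` for sets of configurations. -/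
def MedLE {α A β B : Type*} [Encodable α] [Encodable A] [Encodable β] [Encodable B]
    (X : Set (α → A)) (Y : Set (β → B)) : Prop :=
  BaireLE (mSet X) (mSet Y)

/-- `m(X) = m(Y)` for sets of configurations. -/
def MedEquiv {α A β B : Type*} [Encodable α] [Encodable A] [Encodable β] [Encodable B]
    (X : Set (α → A)) (Y : Set (β → B)) : Prop :=
  MedLE X Y ∧ MedLE Y X

/-! ### Subshifts -/

/-- The left shift action: `(g • x) h = x (g⁻¹ h)`. -/
def shift {G A : Type*} [Group G] (g : G) (x : G → A) : G → A := fun h => x (g⁻¹ * h)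

/-- The prodiscrete topology on `A^G`. -/
def prodiscrete (G A : Type*) : TopologicalSpace (G → A) :=
  @Pi.topologicalSpace G (fun _ => A) fun _ => ⊥

/-- A subshift: a shift-invariant subset of `A^G`, closed in the prodiscrete topology. -/
def IsSubshift {G A : Type*} [Group G] (X : Set (G → A)) : Prop :=
  (∀ x ∈ X, ∀ g : G, shift g x ∈ X) ∧ @IsClosed (G → A) (prodiscrete G A) X

/-- A pattern: a map `p : D → A` with `D ⊆ G` finite. -/
structure Pattern (G A : Type*) where
  dom : Finset G
  val : {g // g ∈ dom} → A

/-- The translate `g • x` agrees with the pattern `p` on its domain. -/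
def MatchesAt {G A : Type*} [Group G] (p : Pattern G A) (g : G) (x : G → A) : Prop :=
  ∀ h : {g' // g' ∈ p.dom}, shift g x h = p.val h

/-- A subshift of finite type: defined by a finite list of forbidden patterns. -/
def IsSFT {G A : Type*} [Group G] (X : Set (G → A)) : Prop :=
  ∃ F : List (Pattern G A), X = {x | ∀ p ∈ F, ∀ g : G, ¬MatchesAt p g x}

/-- A morphism between subshifts: a continuous shift-equivariant map from `X` to `Y`. -/
def IsMorphism {G A B : Type*} [Group G] (X : Set (G → A)) (Y : Set (G → B))
    (φ : (G → A) → (G → B)) : Prop :=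
  Set.MapsTo φ X Y ∧
    @ContinuousOn (G → A) (G → B) (prodiscrete G A) (prodiscrete G B) φ X ∧
    ∀ x ∈ X, ∀ g : G, φ (shift g x) = shift g (φ x)

/-- A sofic subshift: the image of an SFT (on some finite alphabet) under a topological
factor map. -/
def IsSofic {G A : Type*} [Group G] (X : Set (G → A)) : Prop :=
  ∃ (B : Type) (_ : Finite B) (Y : Set (G → B)) (φ : (G → B) → (G → A)),
    IsSFT Y ∧ IsMorphism Y X φ ∧ φ '' Y = X

/-! ### Finitely generated groups, covers and pullbacks -/

/-- `σ` enumerates a finite symmetric generating set of `G`. -/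
def IsSymmGen {G : Type*} [Group G] {k : ℕ} (σ : Fin k → G) : Prop :=
  Subgroup.closure (Set.range σ) = ⊤ ∧ ∀ i, (σ i)⁻¹ ∈ Set.range σ

/-- The canonical encoding of a free group via reduced words. -/
instance freeGroupEncodable {α : Type*} [DecidableEq α] [Encodable α] :
    Encodable (FreeGroup α) :=
  Encodable.ofLeftInjection FreeGroup.toWord (fun l => some (FreeGroup.mk l))
    fun _ => congrArg some FreeGroup.mk_toWord

/-- The canonical homomorphism from the free group determined by `σ`. -/
def cover {G : Type*} [Group G] {k : ℕ} (σ : Fin k → G) : FreeGroup (Fin k) →* G :=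
  FreeGroup.lift σ

/-- The pullback of a subshift along a group homomorphism. -/
def pullback {K G A : Type*} [Group K] [Group G] (ρ : K →* G) (X : Set (G → A)) :
    Set (K → A) :=
  (fun x => x ∘ ρ) '' X

/-- The group element represented by a word over the generators. -/
def wordVal {G : Type*} [Group G] {k : ℕ} (σ : Fin k → G) (w : List (Fin k × Bool)) : G :=
  cover σ (FreeGroup.mk w)

/-- `G` is recursively presented w.r.t. `σ`: its word problem is recursively enumerable. -/
def RecursivelyPresented {G : Type*} [Group G] {k : ℕ} (σ : Fin k → G) : Prop :=
  ∃ f : ℕ → Option (List (Fin k × Bool)), Computable f ∧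
    ∀ w : List (Fin k × Bool), (wordVal σ w = 1 ↔ ∃ n, f n = some w)

/-- The membership problem of the subgroup `H` in `G` is decidable w.r.t. `σ`. -/
def DecidableMembership {G : Type*} [Group G] {k : ℕ} (σ : Fin k → G)
    (H : Subgroup G) : Prop :=
  ∃ φ : List (Fin k × Bool) → Bool, Computable φ ∧
    ∀ w : List (Fin k × Bool), (φ w = true ↔ wordVal σ w ∈ H)

/-- `G` has decidable word problem w.r.t. `σ`. -/
def DecidableWordProblem {G : Type*} [Group G] {k : ℕ} (σ : Fin k → G) : Prop :=
  ∃ φ : List (Fin k × Bool) → Bool, Computable φ ∧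
    ∀ w : List (Fin k × Bool), (φ w = true ↔ wordVal σ w = 1)

/-- The set of configurations on the free group matching a coded pattern: a pattern is
coded as a list of pairs (code of a group element, code of a letter). -/
def codedCylinder {k : ℕ} {A : Type*} [Encodable A] (p : List (ℕ × ℕ)) :
    Set (FreeGroup (Fin k) → A) :=
  {x | ∀ q ∈ p, ∀ g : FreeGroup (Fin k),
    Encodable.encode g = q.1 → Encodable.encode (x g) = q.2}

/-- `X` is an effective subshift: the complement of its pullback to the free group is the
union of the cylinders of a computably enumerable sequence of finitely supported patterns. -/
def IsEffective {G : Type*} [Group G] {k : ℕ} (σ : Fin k → G) {A : Type*} [Encodable A]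
    (X : Set (G → A)) : Prop :=
  ∃ f : ℕ → List (ℕ × ℕ), Computable f ∧
    (pullback (cover σ) X)ᶜ = ⋃ n, codedCylinder (f n)

/-! ### Degree spectra -/

/-- The Medvedev degree of `P` belongs to `M_SFT(G)`: some nonempty `G`-SFT has the
Medvedev degree of `P`. -/
def IsSFTDeg {G : Type*} [Group G] {k : ℕ} (σ : Fin k → G) (P : Set (ℕ → ℕ)) : Prop :=
  ∃ (n : ℕ) (X : Set (G → Fin n)), IsSFT X ∧ X.Nonempty ∧
    BaireEquiv (mSet (pullback (cover σ) X)) P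

/-- The Medvedev degree of `P` belongs to `M_sof(G)`. -/
def IsSoficDeg {G : Type*} [Group G] {k : ℕ} (σ : Fin k → G) (P : Set (ℕ → ℕ)) : Prop :=
  ∃ (n : ℕ) (X : Set (G → Fin n)), IsSofic X ∧ X.Nonempty ∧
    BaireEquiv (mSet (pullback (cover σ) X)) P

/-- The Medvedev degree of `P` belongs to `M_eff(G)`. -/
def IsEffDeg {G : Type*} [Group G] {k : ℕ} (σ : Fin k → G) (P : Set (ℕ → ℕ)) : Prop :=
  ∃ (n : ℕ) (X : Set (G → Fin n)), IsSubshift X ∧ IsEffective σ X ∧ X.Nonempty ∧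
    BaireEquiv (mSet (pullback (cover σ) X)) P

/-! ### Word metrics and quasi-isometries -/

/-- The word length of `g` w.r.t. the (symmetric) generating map `σ`. -/
noncomputable def wordNorm {G : Type*} [Group G] {k : ℕ} (σ : Fin k → G) (g : G) : ℕ :=
  sInf {n | ∃ w : List (Fin k), w.length = n ∧ (w.map σ).prod = g}

/-- The word metric on `G` w.r.t. `σ`, as a real number. -/
noncomputable def wordDist {G : Type*} [Group G] {k : ℕ} (σ : Fin k → G) (g g' : G) : ℝ :=
  (wordNorm σ (g⁻¹ * g') : ℝ)

/-- `f : G → H` is a quasi-isometry w.r.t. the word metrics given by `σ` and `τ`. -/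
def IsQIGroups {G H : Type*} [Group G] [Group H] {k r : ℕ} (σ : Fin k → G)
    (τ : Fin r → H) (f : G → H) : Prop :=
  ∃ C : ℝ, 1 ≤ C ∧
    (∀ g g' : G, (1 / C) * wordDist σ g g' - C ≤ wordDist τ (f g) (f g') ∧
      wordDist τ (f g) (f g') ≤ C * wordDist σ g g' + C) ∧
    ∀ h : H, ∃ g : G, wordDist τ h (f g) ≤ C

/-- `f : G → Y` is a quasi-isometry from the group `G` (with word metric from `σ`) to the
metric space `Y`. -/
def IsQIToSpace {G : Type*} [Group G] {k : ℕ} (σ : Fin k → G) {Y : Type*}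
    [MetricSpace Y] (f : G → Y) : Prop :=
  ∃ C : ℝ, 1 ≤ C ∧
    (∀ g g' : G, (1 / C) * wordDist σ g g' - C ≤ dist (f g) (f g') ∧
      dist (f g) (f g') ≤ C * wordDist σ g g' + C) ∧
    ∀ y : Y, ∃ g : G, dist y (f g) ≤ C

/-- `f : G → H` is computable w.r.t. the generating maps `σ` and `τ`: some computable map
on words sends each word representing `g` to a word representing `f g`. -/
def ComputableMap {G H : Type*} [Group G] [Group H] {k r : ℕ} (σ : Fin k → G)
    (τ : Fin r → H) (f : G → H) : Prop :=
  ∃ φ : List (Fin k × Bool) → List (Fin r × Bool), Computable φ ∧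
    ∀ w : List (Fin k × Bool), wordVal τ (φ w) = f (wordVal σ w)


/-! ### Auxiliary lemmas for statement5 -/

section Statement5Aux

open Encodable

private lemma prefix_getElem?_some {α : Type*} {l₁ l₂ : List α} (h : l₁ <+: l₂) {i : ℕ} {a : α}
    (ha : l₁[i]? = some a) : l₂[i]? = some a := by
  rcases h with ⟨t, rfl⟩
  have hi : i < l₁.length := (List.getElem?_eq_some_iff.mp ha).1
  rw [List.getElem?_append_left hi]; exact ha

private lemma pref_length (x : ℕ → ℕ) (k : ℕ) : (pref x k).length = k := by simp [pref]

private lemma pref_getElem?_lt (x : ℕ → ℕ) {k i : ℕ} (h : i < k) :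
    (pref x k)[i]? = some (x i) := by
  unfold pref
  rw [List.getElem?_map, List.getElem?_range h]; rfl

private lemma pref_prefix (x : ℕ → ℕ) {k k' : ℕ} (h : k ≤ k') : pref x k <+: pref x k' := by
  have he : pref x k = (pref x k').take k := by
    unfold pref
    rw [← List.map_take, List.take_range, Nat.min_eq_left h]
  rw [he]; exact List.take_prefix _ _

private lemma baireLE_trans {P Q R : Set (ℕ → ℕ)} (h₁ : BaireLE P Q) (h₂ : BaireLE Q R) :
    BaireLE P R := by
  obtain ⟨φ, hφc, hφm, hφ⟩ := h₁
  obtain ⟨ψ, hψc, hψm, hψ⟩ := h₂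
  refine ⟨fun l => φ (ψ l), hφc.comp hψc, fun l₁ l₂ h => hφm _ _ (hψm _ _ h), ?_⟩
  intro x hx
  obtain ⟨y, hyQ, hy⟩ := hψ x hx
  have hval : ∀ k i a, (ψ (pref x k))[i]? = some a → a = y i := by
    intro k i a hi
    obtain ⟨k', hk'⟩ := hy i
    have e1 := prefix_getElem?_some (hψm _ _ (pref_prefix x (le_max_left k k'))) hi
    have e2 := prefix_getElem?_some (hψm _ _ (pref_prefix x (le_max_right k k'))) hk'
    rw [e1] at e2
    exact Option.some.inj e2
  have key : ∀ k : ℕ, ψ (pref x k) = pref y ((ψ (pref x k)).length) := by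
    intro k
    apply List.ext_getElem?
    intro i
    by_cases h : i < (ψ (pref x k)).length
    · have ha : (ψ (pref x k))[i]? = some ((ψ (pref x k))[i]) :=
        List.getElem?_eq_some_iff.mpr ⟨h, rfl⟩
      rw [ha, pref_getElem?_lt y h]
      exact congrArg some (hval k i _ ha)
    · rw [List.getElem?_eq_none (Nat.le_of_not_lt h), List.getElem?_eq_none]
      rw [pref_length]
      exact Nat.le_of_not_lt h
  obtain ⟨z, hzP, hz⟩ := hφ y hyQ
  refine ⟨z, hzP, ?_⟩
  intro n
  obtain ⟨K, hK⟩ := hz n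
  obtain ⟨k, hk⟩ := hy K
  have hlen : K < (ψ (pref x k)).length := (List.getElem?_eq_some_iff.mp hk).1
  refine ⟨k, ?_⟩
  have hpre : φ (pref y K) <+: φ (pref y ((ψ (pref x k)).length)) :=
    hφm _ _ (pref_prefix y (Nat.le_of_lt hlen))
  show (φ (ψ (pref x k)))[n]? = some (z n)
  rw [key k]
  exact prefix_getElem?_some hpre hK

/-! greedy prefix functional from a code map -/

private def vOpt (r : ℕ → Option ℕ) (l : List ℕ) (n : ℕ) : Option ℕ :=
  ((r n).map fun m => l[m]?).getD (some 0)

private lemma vOpt_mono {r : ℕ → Option ℕ} {l₁ l₂ : List ℕ} (h : l₁ <+: l₂) {n a : ℕ}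
    (ha : vOpt r l₁ n = some a) : vOpt r l₂ n = some a := by
  unfold vOpt at ha ⊢
  cases hr : r n with
  | none => rw [hr] at ha; simpa using ha
  | some m =>
    rw [hr] at ha
    simp only [Option.map_some, Option.getD_some] at ha ⊢
    exact prefix_getElem?_some h ha

private def greedy (r : ℕ → Option ℕ) (l : List ℕ) : ℕ → List ℕ
  | 0 => []
  | j+1 => ((vOpt r l (greedy r l j).length).map fun a => greedy r l j ++ [a]).getD (greedy r l j)

private lemma greedy_spec (r : ℕ → Option ℕ) (l : List ℕ) (j : ℕ) :
    ∃ c, greedy r l j = (List.range c).map (fun n => (vOpt r l n).getD 0) ∧ c ≤ j ∧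
      (∀ i < c, ∃ a, vOpt r l i = some a) ∧ (c < j → vOpt r l c = none) := by
  induction j with
  | zero => exact ⟨0, rfl, le_refl 0, fun i hi => absurd hi (Nat.not_lt_zero i), fun h => absurd h (lt_irrefl 0)⟩
  | succ j ih =>
    obtain ⟨c, hrep, hcj, hsome, hstop⟩ := ih
    have hlen : (greedy r l j).length = c := by rw [hrep]; simp
    rcases Nat.lt_or_ge c j with hlt | hge
    · have hnone := hstop hlt
      refine ⟨c, ?_, hcj.trans (Nat.le_succ j), hsome, fun _ => hnone⟩
      show ((vOpt r l (greedy r l j).length).map fun a => greedy r l j ++ [a]).getD (greedy r l j) = _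
      rw [hlen, hnone]
      simpa using hrep
    · have hc : c = j := le_antisymm hcj hge
      subst hc
      cases hv : vOpt r l c with
      | none =>
        refine ⟨c, ?_, Nat.le_succ c, hsome, fun _ => hv⟩
        show ((vOpt r l (greedy r l c).length).map fun a => greedy r l c ++ [a]).getD (greedy r l c) = _
        rw [hlen, hv]
        simpa using hrep
      | some a =>
        refine ⟨c+1, ?_, le_refl (c+1), ?_, ?_⟩
        · show ((vOpt r l (greedy r l c).length).map fun a => greedy r l c ++ [a]).getD (greedy r l c) = _
          rw [hlen, hv, List.range_succ, List.map_append, ← hrep]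
          simp [hv]
        · intro i hi
          rcases Nat.lt_or_ge i c with h' | h'
          · exact hsome i h'
          · have : i = c := le_antisymm (Nat.lt_succ_iff.mp hi) h'
            exact ⟨a, this ▸ hv⟩
        · intro h; exact absurd h (lt_irrefl _)

private def phiOf (r : ℕ → Option ℕ) (l : List ℕ) : List ℕ := greedy r l l.length

private lemma phiOf_mono (r : ℕ → Option ℕ) {l₁ l₂ : List ℕ} (h : l₁ <+: l₂) :
    phiOf r l₁ <+: phiOf r l₂ := by
  obtain ⟨c₁, h1, hc1, hs1, _⟩ := greedy_spec r l₁ l₁.length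
  obtain ⟨c₂, h2, hc2, _, hst2⟩ := greedy_spec r l₂ l₂.length
  have hlen : l₁.length ≤ l₂.length := h.length_le
  have hcc : c₁ ≤ c₂ := by
    by_contra hcon
    push_neg at hcon
    have h₂n := hst2 (lt_of_lt_of_le hcon (hc1.trans hlen))
    obtain ⟨a, ha⟩ := hs1 c₂ hcon
    rw [vOpt_mono h ha] at h₂n
    exact Option.some_ne_none _ h₂n
  unfold phiOf
  rw [h1, h2]
  have he : (List.range c₁).map (fun n => (vOpt r l₁ n).getD 0) =
      ((List.range c₂).map (fun n => (vOpt r l₂ n).getD 0)).take c₁ := by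
    rw [← List.map_take, List.take_range, Nat.min_eq_left hcc]
    apply List.map_congr_left
    intro n hn
    obtain ⟨a, ha⟩ := hs1 n (List.mem_range.mp hn)
    rw [ha, vOpt_mono h ha]
  rw [he]
  exact List.take_prefix _ _

private lemma greedy_eq (r : ℕ → Option ℕ) (l : List ℕ) : ∀ j : ℕ,
    greedy r l j = Nat.rec (motive := fun _ => List ℕ) []
      (fun _ ih => ((vOpt r l ih.length).map fun a => ih ++ [a]).getD ih) j
  | 0 => rfl
  | (j+1) => by
    show ((vOpt r l (greedy r l j).length).map fun a => greedy r l j ++ [a]).getD (greedy r l j) = _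
    rw [greedy_eq r l j]

private lemma phiOf_primrec {r : ℕ → Option ℕ} (hr : Primrec r) : Primrec (phiOf r) := by
  have hv : Primrec₂ (vOpt r) := by
    have h1 : Primrec (fun a : List ℕ × ℕ => (r a.2).map (fun m => a.1[m]?)) :=
      Primrec.option_map (hr.comp Primrec.snd)
        ((Primrec.list_getElem?.comp (Primrec.fst.comp Primrec.fst) Primrec.snd).to₂)
    exact (Primrec.option_getD.comp h1 (Primrec.const (some 0))).to₂
  have hstep : Primrec₂ (fun (l : List ℕ) (p : ℕ × List ℕ) =>
      ((vOpt r l p.2.length).map fun a => p.2 ++ [a]).getD p.2) := by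
    have harg : Primrec (fun q : List ℕ × (ℕ × List ℕ) => vOpt r q.1 q.2.2.length) :=
      hv.comp Primrec.fst (Primrec.list_length.comp (Primrec.snd.comp Primrec.snd))
    have hmap : Primrec (fun q : List ℕ × (ℕ × List ℕ) =>
        (vOpt r q.1 q.2.2.length).map (fun a => q.2.2 ++ [a])) :=
      Primrec.option_map harg
        ((Primrec.list_concat.comp ((Primrec.snd.comp Primrec.snd).comp Primrec.fst)
          Primrec.snd).to₂)
    exact (Primrec.option_getD.comp hmap (Primrec.snd.comp Primrec.snd)).to₂
  have := Primrec.nat_rec' Primrec.list_length (Primrec.const ([] : List ℕ)) hstep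
  exact this.of_eq fun l => (greedy_eq r l l.length).symm

private lemma baireLE_of_code {P Q : Set (ℕ → ℕ)} {r : ℕ → Option ℕ} (hr : Primrec r)
    (h : ∀ x ∈ Q, (fun n => ((r n).map x).getD 0) ∈ P) : BaireLE P Q := by
  refine ⟨phiOf r, (phiOf_primrec hr).to_comp, fun l₁ l₂ h12 => phiOf_mono r h12, ?_⟩
  intro x hx
  refine ⟨_, h x hx, fun n => ?_⟩
  set k := n + 1 + (Finset.range (n+1)).sup (fun i => (r i).getD 0) with hkdef
  refine ⟨k, ?_⟩
  have hall : ∀ i ≤ n, vOpt r (pref x k) i = some (((r i).map x).getD 0) := by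
    intro i hi
    cases hri : r i with
    | none => simp [vOpt, hri]
    | some m =>
      have hm : m < k := by
        have h1 : (r i).getD 0 ≤ (Finset.range (n+1)).sup (fun i => (r i).getD 0) :=
          Finset.le_sup (f := fun i => (r i).getD 0) (Finset.mem_range.mpr (Nat.lt_succ_of_le hi))
        rw [hri] at h1
        simp only [Option.getD_some] at h1
        omega
      simp [vOpt, hri, pref_getElem?_lt x hm]
  obtain ⟨c, hrep, _, _, hstop⟩ := greedy_spec r (pref x k) (pref x k).length
  have hklen : (pref x k).length = k := pref_length x k
  have hnc : n < c := by
    by_contra hcon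
    push_neg at hcon
    have hck : c < (pref x k).length := by rw [hklen]; omega
    have := hstop hck
    rw [hall c hcon] at this
    exact Option.some_ne_none _ this
  show (phiOf r (pref x k))[n]? = _
  unfold phiOf
  rw [hrep, List.getElem?_map, List.getElem?_range hnc]
  simp [hall n (le_refl n)]

/-! reduce is primitive recursive -/

private def redStep {α : Type*} [DecidableEq α] (p : α × Bool) (ih : List (α × Bool)) :
    List (α × Bool) :=
  List.casesOn ih [p] fun hd tl => if p = (hd.1, !hd.2) then tl else p :: hd :: tl

private lemma reduce_eq_foldr {α : Type*} [DecidableEq α] (L : List (α × Bool)) :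
    FreeGroup.reduce L = L.foldr redStep [] := by
  induction L with
  | nil => rfl
  | cons p L ih =>
    rw [List.foldr_cons, ← ih, FreeGroup.reduce.cons]
    cases FreeGroup.reduce L with
    | nil => rfl
    | cons hd tl =>
      show (if p.1 = hd.1 ∧ p.2 = !hd.2 then tl else p :: hd :: tl) =
        (if p = (hd.1, !hd.2) then tl else p :: hd :: tl)
      by_cases hc : p.1 = hd.1 ∧ p.2 = !hd.2
      · rw [if_pos hc, if_pos ((@Prod.ext_iff _ _ p (hd.1, !hd.2)).mpr hc)]
      · rw [if_neg hc,
          if_neg (fun he => hc ((@Prod.ext_iff _ _ p (hd.1, !hd.2)).mp he))]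

private lemma primrec_reduce {α : Type*} [Primcodable α] [DecidableEq α] :
    Primrec (FreeGroup.reduce (α := α)) := by
  have hnot : Primrec Bool.not := Primrec.dom_finite _
  have hcond : PrimrecPred (fun z : (List (α × Bool) × ((α × Bool) × List (α × Bool))) × ((α × Bool) × List (α × Bool)) =>
      z.1.2.1 = (z.2.1.1, !z.2.1.2)) :=
    Primrec.eq.comp (Primrec.fst.comp (Primrec.snd.comp Primrec.fst))
      (Primrec.pair (Primrec.fst.comp (Primrec.fst.comp Primrec.snd))
        (hnot.comp (Primrec.snd.comp (Primrec.fst.comp Primrec.snd))))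
  have hh : Primrec₂ (fun (a : List (α × Bool) × ((α × Bool) × List (α × Bool)))
      (q : (α × Bool) × List (α × Bool)) =>
      if a.2.1 = (q.1.1, !q.1.2) then q.2 else a.2.1 :: q.1 :: q.2) :=
    (Primrec.ite hcond (Primrec.snd.comp Primrec.snd)
      (Primrec.list_cons.comp (Primrec.fst.comp (Primrec.snd.comp Primrec.fst))
        (Primrec.list_cons.comp (Primrec.fst.comp Primrec.snd)
          (Primrec.snd.comp Primrec.snd)))).to₂
  have hcases : Primrec (fun a : List (α × Bool) × ((α × Bool) × List (α × Bool)) =>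
      List.casesOn (motive := fun _ => List (α × Bool)) a.2.2 [a.2.1] fun hd tl =>
        if a.2.1 = (hd.1, !hd.2) then tl else a.2.1 :: hd :: tl) :=
    Primrec.list_casesOn (Primrec.snd.comp Primrec.snd)
      (Primrec.list_cons.comp (Primrec.fst.comp Primrec.snd) (Primrec.const [])) hh
  have hstep : Primrec₂ (fun (_ : List (α × Bool)) (q : (α × Bool) × List (α × Bool)) =>
      redStep q.1 q.2) := hcases.to₂
  have hfold : Primrec (fun L : List (α × Bool) => L.foldr (fun b s => redStep b s) []) :=
    Primrec.list_foldr Primrec.id (Primrec.const []) hstep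
  exact hfold.of_eq fun L => (reduce_eq_foldr L).symm

/-! the key reduction between pullbacks along two covers -/

private lemma mset_pullback_le {H : Type*} [Group H] {k l n : ℕ}
    (π₁ : FreeGroup (Fin k) →* H) (π₂ : FreeGroup (Fin l) →* H)
    (hs : Function.Surjective π₂) (X : Set (H → Fin n)) :
    BaireLE (mSet (pullback π₁ X)) (mSet (pullback π₂ X)) := by
  choose u hu using fun i => hs (π₁ (FreeGroup.of i))
  set θ : FreeGroup (Fin k) →* FreeGroup (Fin l) := FreeGroup.lift u with hθdef
  have hθ : ∀ g, π₂ (θ g) = π₁ g := by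
    intro g
    have he : π₂.comp θ = π₁ := FreeGroup.ext_hom _ _ (fun a => by
      simp [hθdef, FreeGroup.lift_apply_of, hu])
    rw [← he]; rfl
  set W : Fin k × Bool → List (Fin l × Bool) := fun p => (θ (FreeGroup.mk [p])).toWord with hWdef
  have hmk : ∀ w : List (Fin k × Bool), θ (FreeGroup.mk w) = FreeGroup.mk (w.flatMap W) := by
    intro w
    induction w with
    | nil =>
      show θ (FreeGroup.mk []) = FreeGroup.mk (([] : List (Fin k × Bool)).flatMap W)
      rw [show (([] : List (Fin k × Bool)).flatMap W) = [] from rfl,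
        show FreeGroup.mk ([] : List (Fin k × Bool)) = 1 from FreeGroup.one_eq_mk.symm]
      exact map_one θ
    | cons p w ih =>
      have h1 : FreeGroup.mk (p :: w) = FreeGroup.mk [p] * FreeGroup.mk w :=
        (FreeGroup.mul_mk (L₁ := [p]) (L₂ := w)).symm
      rw [h1, map_mul, ih, show (p :: w).flatMap W = W p ++ w.flatMap W from rfl,
        ← FreeGroup.mul_mk]
      congr 1
      exact (FreeGroup.mk_toWord).symm
  set r : ℕ → Option ℕ := fun m =>
    (Encodable.decode (α := List (Fin k × Bool)) m).map
      (fun w => Encodable.encode (FreeGroup.reduce (w.flatMap W))) with hrdef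
  have hr : Primrec r :=
    Primrec.option_map Primrec.decode
      (((Primrec.encode.comp (primrec_reduce.comp
        (Primrec.list_flatMap Primrec.id
          (((Primrec.dom_finite W).comp Primrec.snd).to₂)))).comp Primrec.snd).to₂)
  apply baireLE_of_code hr
  rintro y ⟨z, ⟨x, hxX, rfl⟩, rfl⟩
  have hfun : (fun m => ((r m).map (confFun (x ∘ ⇑π₂))).getD 0) = confFun (x ∘ ⇑π₁) := by
    funext m
    rcases hd : (Encodable.decode (α := List (Fin k × Bool)) m) with _ | w
    · have hdF : (Encodable.decode (α := FreeGroup (Fin k)) m) = none := by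
        show ((Encodable.decode (α := List (Fin k × Bool)) m).bind fun w =>
          some (FreeGroup.mk w)) = none
        rw [hd]; rfl
      show ((r m).map (confFun (x ∘ ⇑π₂))).getD 0 =
        Encodable.encode ((Encodable.decode (α := FreeGroup (Fin k)) m).map (x ∘ ⇑π₁))
      rw [hdF, hrdef]
      simp [hd]
    · have hdF : (Encodable.decode (α := FreeGroup (Fin k)) m) = some (FreeGroup.mk w) := by
        show ((Encodable.decode (α := List (Fin k × Bool)) m).bind fun w =>
          some (FreeGroup.mk w)) = _
        rw [hd]; rfl
      have henc : Encodable.encode (FreeGroup.reduce (w.flatMap W)) =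
          Encodable.encode (θ (FreeGroup.mk w)) := by
        rw [hmk w]
        show _ = Encodable.encode (FreeGroup.mk (w.flatMap W)).toWord
        rw [FreeGroup.toWord_mk]
      have hLHS : ((r m).map (confFun (x ∘ ⇑π₂))).getD 0 =
          confFun (x ∘ ⇑π₂) (Encodable.encode (θ (FreeGroup.mk w))) := by
        rw [hrdef]
        simp only [hd, Option.map_some, Option.getD_some]
        rw [henc]
      rw [hLHS]
      show Encodable.encode ((Encodable.decode
          (Encodable.encode (θ (FreeGroup.mk w)))).map (x ∘ ⇑π₂)) =
        Encodable.encode ((Encodable.decode (α := FreeGroup (Fin k)) m).map (x ∘ ⇑π₁))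
      rw [Encodable.encodek, hdF]
      show Encodable.encode (some (x (π₂ (θ (FreeGroup.mk w))))) =
        Encodable.encode (some (x (π₁ (FreeGroup.mk w))))
      rw [hθ]
  rw [hfun]
  exact ⟨x ∘ ⇑π₁, ⟨x, hxX, rfl⟩, rfl⟩

private lemma cover_surjective {G : Type*} [Group G] {k : ℕ} {σ : Fin k → G}
    (hσ : IsSymmGen σ) : Function.Surjective (cover σ) := by
  rw [← MonoidHom.range_eq_top, eq_top_iff, ← hσ.1]
  apply (Subgroup.closure_le _).mpr
  rintro _ ⟨i, rfl⟩
  exact ⟨FreeGroup.of i, FreeGroup.lift_apply_of⟩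

/-! pulling back SFTs and sofic shifts along a quotient with f.g. kernel -/

private lemma isSFT_pullback {G H A : Type*} [Group G] [Group H] [Finite A]
    (ρ : G →* H) (hρ : Function.Surjective ρ) (hN : (ρ.ker).FG)
    {X : Set (H → A)} (hX : IsSFT X) : IsSFT (pullback ρ X) := by
  classical
  obtain ⟨F, rfl⟩ := hX
  obtain ⟨S, hSclo, hSfin⟩ := (Subgroup.fg_iff _).mp hN
  letI := Fintype.ofFinite A
  set s : H → G := Function.surjInv hρ with hsdef
  have hsval : ∀ h, ρ (s h) = h := fun h => Function.surjInv_eq hρ h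
  have hSker : ∀ t ∈ S, t ∈ ρ.ker := by
    intro t ht
    rw [← hSclo]
    exact Subgroup.subset_closure ht
  have hmemlift : ∀ (p : Pattern H A) (g : G), g ∈ p.dom.image s → ρ g ∈ p.dom := by
    intro p g hg
    obtain ⟨h0, hh0, rfl⟩ := Finset.mem_image.mp hg
    rw [hsval]; exact hh0
  set liftPat : Pattern H A → Pattern G A := fun p =>
    ⟨p.dom.image s, fun g => p.val ⟨ρ g.1, hmemlift p g.1 g.2⟩⟩ with hliftdef
  set constPats : List (Pattern G A) :=
    (hSfin.toFinset.toList.filter (fun t => t ≠ 1)).flatMap (fun t =>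
      ((Finset.univ : Finset (A × A)).toList.filter (fun q => q.1 ≠ q.2)).map (fun q =>
        ⟨{1, t}, fun h => if (h : G) = 1 then q.1 else q.2⟩)) with hcpdef
  refine ⟨constPats ++ F.map liftPat, ?_⟩
  ext x
  constructor
  · rintro ⟨x', hx', rfl⟩ p hp g hmatch
    rcases List.mem_append.mp hp with hp | hp
    · rw [hcpdef] at hp
      obtain ⟨t, ht, hp⟩ := List.mem_flatMap.mp hp
      obtain ⟨q, hq, rfl⟩ := List.mem_map.mp hp
      obtain ⟨htS, ht1⟩ := List.mem_filter.mp ht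
      obtain ⟨-, hq12⟩ := List.mem_filter.mp hq
      have ht1' : t ≠ 1 := by simpa using ht1
      have hq12' : q.1 ≠ q.2 := by simpa using hq12
      have htS' : t ∈ S := hSfin.mem_toFinset.mp (Finset.mem_toList.mp htS)
      have h1 : x' (ρ (g⁻¹ * 1)) = q.1 :=
        (hmatch ⟨1, Finset.mem_insert_self 1 {t}⟩).trans (if_pos rfl)
      have h2 : x' (ρ (g⁻¹ * t)) = q.2 :=
        (hmatch ⟨t, Finset.mem_insert_of_mem (Finset.mem_singleton_self t)⟩).trans
          (if_neg ht1')
      have hker : ρ (g⁻¹ * t) = ρ (g⁻¹ * 1) := by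
        rw [map_mul, map_mul, MonoidHom.mem_ker.mp (hSker t htS'), map_one]
      rw [hker, h1] at h2
      exact hq12' h2
    · obtain ⟨p₀, hp₀, rfl⟩ := List.mem_map.mp hp
      refine hx' p₀ hp₀ (ρ g) ?_
      intro h
      have hmem3 : s h.1 ∈ (liftPat p₀).dom := Finset.mem_image_of_mem s h.2
      have hm := hmatch ⟨s h.1, hmem3⟩
      calc shift (ρ g) x' h.1 = x' ((ρ g)⁻¹ * h.1) := rfl
        _ = x' (ρ (g⁻¹ * s h.1)) := by rw [map_mul, map_inv, hsval]
        _ = (liftPat p₀).val ⟨s h.1, hmem3⟩ := hm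
        _ = p₀.val ⟨ρ (s h.1), hmemlift p₀ (s h.1) hmem3⟩ := rfl
        _ = p₀.val h := congrArg p₀.val (Subtype.ext (hsval h.1))
  · intro hx
    have hx' : ∀ p ∈ constPats ++ F.map liftPat, ∀ g : G, ¬MatchesAt p g x := hx
    have hT : ∀ t ∈ S, ∀ g : G, x (g * t) = x g := by
      intro t htS g
      by_cases h1 : t = 1
      · rw [h1, mul_one]
      by_contra hne
      refine hx' ⟨{1, t}, fun h => if (h : G) = 1 then x g else x (g * t)⟩ ?_ g⁻¹ ?_
      · apply List.mem_append_left
        rw [hcpdef]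
        apply List.mem_flatMap.mpr
        refine ⟨t, List.mem_filter.mpr
          ⟨Finset.mem_toList.mpr (hSfin.mem_toFinset.mpr htS), by simpa using h1⟩, ?_⟩
        apply List.mem_map.mpr
        exact ⟨(x g, x (g * t)), List.mem_filter.mpr
          ⟨Finset.mem_toList.mpr (Finset.mem_univ _), by simpa using fun e => hne e.symm⟩, rfl⟩
      · intro h
        rcases Finset.mem_insert.mp h.2 with he | he
        · have he' : (h : G) = 1 := he
          simp [shift, he', inv_inv]
        · have he' : (h : G) = t := Finset.mem_singleton.mp he
          simp [shift, he', inv_inv, h1]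
    have hconst : ∀ nn ∈ ρ.ker, ∀ g : G, x (g * nn) = x g := by
      intro nn hnn
      have hmem : nn ∈ Subgroup.closure S := by rw [hSclo]; exact hnn
      refine Subgroup.closure_induction (fun t ht => hT t ht) (fun g => by rw [mul_one])
        (fun a b _ _ ha hb g => by rw [← mul_assoc, hb, ha]) (fun a _ ha g => ?_) hmem
      have h2 := ha (g * a⁻¹)
      rw [inv_mul_cancel_right] at h2
      exact h2.symm
    set xb : H → A := fun h => x (s h) with hxbdef
    have hxρ : x = xb ∘ ⇑ρ := by
      funext g
      show x g = x (s (ρ g))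
      have hk : g⁻¹ * s (ρ g) ∈ ρ.ker := by
        rw [MonoidHom.mem_ker, map_mul, map_inv, hsval, inv_mul_cancel]
      have h3 := hconst _ hk g
      rw [mul_inv_cancel_left] at h3
      exact h3.symm
    refine ⟨xb, ?_, hxρ.symm⟩
    intro p₀ hp₀ u hmatch
    obtain ⟨g, rfl⟩ := hρ u
    refine hx' (liftPat p₀) (List.mem_append_right _ (List.mem_map_of_mem (f := liftPat) hp₀)) g ?_
    intro h
    have hmem2 : ρ h.1 ∈ p₀.dom := hmemlift p₀ h.1 h.2
    have hm := hmatch ⟨ρ h.1, hmem2⟩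
    calc shift g x h.1 = x (g⁻¹ * h.1) := rfl
      _ = xb (ρ (g⁻¹ * h.1)) := by
          conv_lhs => rw [hxρ]
          rfl
      _ = xb ((ρ g)⁻¹ * ρ h.1) := by rw [map_mul, map_inv]
      _ = p₀.val ⟨ρ h.1, hmem2⟩ := hm
      _ = (liftPat p₀).val h := rfl

private lemma isSofic_pullback {G H A : Type*} [Group G] [Group H]
    (ρ : G →* H) (hρ : Function.Surjective ρ) (hN : (ρ.ker).FG)
    {X : Set (H → A)} (hX : IsSofic X) : IsSofic (pullback ρ X) := by
  classical
  obtain ⟨B, hB, W, φ, hWsft, ⟨hmap, hcont, hequi⟩, himg⟩ := hX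
  haveI := hB
  set s : H → G := Function.surjInv hρ with hsdef
  have hsval : ∀ h, ρ (s h) = h := fun h => Function.surjInv_eq hρ h
  have hretr : ∀ z : H → B, (z ∘ ⇑ρ) ∘ s = z := by
    intro z; funext h; show z (ρ (s h)) = z h; rw [hsval]
  set ψ : (G → B) → (G → A) := fun y => (φ (y ∘ s)) ∘ ⇑ρ with hψdef
  have hψpull : ∀ w : H → B, ψ (w ∘ ⇑ρ) = (φ w) ∘ ⇑ρ := by
    intro w; rw [hψdef]; simp only; rw [hretr w]
  refine ⟨B, hB, pullback ρ W, ψ, isSFT_pullback ρ hρ hN hWsft, ⟨?_, ?_, ?_⟩, ?_⟩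
  · rintro y ⟨w, hw, rfl⟩
    rw [hψpull w]
    exact ⟨φ w, hmap hw, rfl⟩
  · letI : TopologicalSpace A := ⊥
    letI : TopologicalSpace B := ⊥
    show ContinuousOn ψ (pullback ρ W)
    have hrc : Continuous (fun y : G → B => y ∘ s) :=
      continuous_pi fun h => continuous_apply (s h)
    have hec : Continuous (fun z : H → A => z ∘ ⇑ρ) :=
      continuous_pi fun g => continuous_apply (ρ g)
    have hmt : Set.MapsTo (fun y : G → B => y ∘ s) (pullback ρ W) W := by
      rintro y ⟨w, hw, rfl⟩
      show (w ∘ ⇑ρ) ∘ s ∈ W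
      rw [hretr w]; exact hw
    have hφc : ContinuousOn φ W := hcont
    exact hec.comp_continuousOn (hφc.comp hrc.continuousOn hmt)
  · rintro y ⟨w, hw, rfl⟩ g
    have hshift : shift g (w ∘ ⇑ρ) = (shift (ρ g) w) ∘ ⇑ρ := by
      funext g'
      show w (ρ (g⁻¹ * g')) = w ((ρ g)⁻¹ * ρ g')
      rw [map_mul, map_inv]
    rw [hshift, hψpull w, hψpull (shift (ρ g) w), hequi w hw (ρ g)]
    funext g'
    show (φ w) ((ρ g)⁻¹ * ρ g') = (φ w) (ρ (g⁻¹ * g'))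
    rw [map_mul, map_inv]
  · ext z
    constructor
    · rintro ⟨y, ⟨w, hw, rfl⟩, rfl⟩
      rw [hψpull w]
      exact ⟨φ w, himg ▸ Set.mem_image_of_mem φ hw, rfl⟩
    · rintro ⟨x, hx, rfl⟩
      rw [← himg] at hx
      obtain ⟨w, hw, rfl⟩ := hx
      exact ⟨w ∘ ⇑ρ, ⟨w, hw, rfl⟩, hψpull w⟩

end Statement5Aux

/-- Given a short exact sequence `1 → N → G → H → 1` with `G` and `N` finitely
generated, `M_SFT(H) ⊆ M_SFT(G)` and `M_sof(H) ⊆ M_sof(G)`. -/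
theorem statement5 {G H : Type*} [Group G] [Group H] {k l : ℕ}
    (σ : Fin k → G) (hσ : IsSymmGen σ) (τ : Fin l → H) (hτ : IsSymmGen τ)
    (ρ : G →* H) (hρ : Function.Surjective ρ) (hN : Group.FG ↥ρ.ker) :
    ∀ P : Set (ℕ → ℕ),
      (IsSFTDeg τ P → IsSFTDeg σ P) ∧ (IsSoficDeg τ P → IsSoficDeg σ P) := by
  intro P
  have hcovτ : Function.Surjective (cover τ) := cover_surjective hτ
  have hπ₁ : Function.Surjective ⇑(ρ.comp (cover σ)) := by
    rw [MonoidHom.coe_comp]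
    exact hρ.comp (cover_surjective hσ)
  have hNfg : (ρ.ker).FG := (Group.fg_iff_subgroup_fg _).mp hN
  have main : ∀ (n : ℕ) (X : Set (H → Fin n)), X.Nonempty →
      BaireEquiv (mSet (pullback (cover τ) X)) P →
      (pullback ρ X).Nonempty ∧ BaireEquiv (mSet (pullback (cover σ) (pullback ρ X))) P := by
    rintro n X ⟨x0, hx0⟩ hP
    refine ⟨⟨x0 ∘ ⇑ρ, ⟨x0, hx0, rfl⟩⟩, ?_⟩
    have hpb : pullback (cover σ) (pullback ρ X) = pullback (ρ.comp (cover σ)) X := by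
      unfold pullback
      rw [← Set.image_comp]
      rfl
    rw [hpb]
    exact ⟨baireLE_trans (mset_pullback_le (ρ.comp (cover σ)) (cover τ) hcovτ X) hP.1,
      baireLE_trans hP.2 (mset_pullback_le (cover τ) (ρ.comp (cover σ)) hπ₁ X)⟩
  constructor
  · rintro ⟨n, X, hS, hne, hP⟩
    obtain ⟨hne', hP'⟩ := main n X hne hP
    exact ⟨n, pullback ρ X, isSFT_pullback ρ hρ hNfg hS, hne', hP'⟩
  · rintro ⟨n, X, hS, hne, hP⟩
    obtain ⟨hne', hP'⟩ := main n X hne hP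
    exact ⟨n, pullback ρ X, isSofic_pullback ρ hρ hNfg hS, hne', hP'⟩

end MedvedevFormal
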